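/- For every integer q ≥ 2, the sum over k from 1 to q - 1 of 1/C(q, k) is at most 4/q, where C(q, k) denotes the binomial coefficient q choose k. -/

import Mathlib

lemma choose_mono_half (n : ℕ) : ∀ a b : ℕ, a ≤ b → b ≤ n / 2 → n.choose a ≤ n.choose b := by
  intro a b hab
  induction b, hab using Nat.le_induction with
  | base => intro _; exact le_refl _
  | succ b hb ih =>
    intro h
    have hb2 : b < n / 2 := by omega
    exact (ih hb2.le).trans (Nat.choose_le_succ_of_lt_half_left hb2)

lemma choose_two_le (q k : ℕ) (h2 : 2 ≤ k) (hk : k ≤ q - 2) (hq : 4 ≤ q) :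
    q.choose 2 ≤ q.choose k := by
  by_cases hhalf : k ≤ q / 2
  · exact choose_mono_half q 2 k h2 hhalf
  · have hkq : k ≤ q := by omega
    rw [← Nat.choose_symm hkq]
    exact choose_mono_half q 2 (q - k) (by omega) (by omega)

lemma two_choose_two (q : ℕ) : 2 * q.choose 2 = q * (q - 1) := by
  have h := Nat.choose_two_right q
  have h2 : 2 ∣ q * (q - 1) := (Nat.even_mul_pred_self q).two_dvd
  omega

/-- For every integer `q ≥ 2`, the sum of the reciprocals of the interior binomial
coefficients of row `q` is at most `4/q`. -/
theorem sum_inv_binomial_bound (q : ℕ) (hq : 2 ≤ q) :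
    ∑ k ∈ Finset.Icc 1 (q - 1), (1 : ℝ) / (Nat.choose q k : ℝ) ≤ 4 / (q : ℝ) := by
  rcases eq_or_lt_of_le hq with h2 | h2
  · subst h2; norm_num
  rcases eq_or_lt_of_le (show 3 ≤ q from h2) with h3 | h3
  · rw [← h3]
    rw [show Finset.Icc 1 (3 - 1) = {1, 2} by decide]
    norm_num
  have hq4 : 4 ≤ q := by omega
  have hset : Finset.Icc 1 (q - 1) = insert 1 (insert (q - 1) (Finset.Icc 2 (q - 2))) := by
    ext k; simp [Finset.mem_Icc]; omega
  have h1mem : (1 : ℕ) ∉ insert (q - 1) (Finset.Icc 2 (q - 2)) := by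
    simp [Finset.mem_Icc]; omega
  have hqmem : q - 1 ∉ Finset.Icc 2 (q - 2) := by simp [Finset.mem_Icc]; omega
  rw [hset, Finset.sum_insert h1mem, Finset.sum_insert hqmem]
  have hc1 : q.choose 1 = q := Nat.choose_one_right q
  have hcq : q.choose (q - 1) = q := by
    rw [show q - 1 = q - 1 from rfl, Nat.choose_symm (by omega)]
    exact Nat.choose_one_right q
  have hQpos : (0 : ℝ) < q := by positivity
  have hc2 : (q.choose 2 : ℝ) = q * (q - 1) / 2 := by
    have := two_choose_two q
    have hcast : (2 : ℝ) * (q.choose 2 : ℝ) = (q : ℝ) * ((q : ℝ) - 1) := by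
      have h' := congrArg (fun n : ℕ => (n : ℝ)) this
      push_cast [Nat.cast_sub (by omega : 1 ≤ q)] at h'
      linarith
    linarith
  have hsum : ∑ k ∈ Finset.Icc 2 (q - 2), (1 : ℝ) / (q.choose k : ℝ)
      ≤ (Finset.Icc 2 (q - 2)).card • ((1 : ℝ) / (q.choose 2 : ℝ)) := by
    apply Finset.sum_le_card_nsmul
    intro k hk
    simp only [Finset.mem_Icc] at hk
    apply one_div_le_one_div_of_le
    · exact_mod_cast Nat.choose_pos (by omega : 2 ≤ q)
    · exact_mod_cast choose_two_le q k hk.1 hk.2 hq4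
  have hcard : (Finset.Icc 2 (q - 2)).card = q - 3 := by
    rw [Nat.card_Icc]; omega
  rw [hcard, nsmul_eq_mul] at hsum
  have hcast3 : ((q - 3 : ℕ) : ℝ) = (q : ℝ) - 3 := by
    push_cast [Nat.cast_sub (by omega : 3 ≤ q)]; ring
  rw [hc1, hcq]
  have htail : ((q - 3 : ℕ) : ℝ) * (1 / (q.choose 2 : ℝ)) ≤ 2 / (q : ℝ) := by
    rw [hcast3, hc2]
    have hq4' : (4 : ℝ) ≤ (q : ℝ) := by exact_mod_cast hq4
    rw [mul_one_div, div_le_div_iff₀ (by nlinarith) hQpos]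
    nlinarith
  have hsplit : 4 / (q : ℝ) = 1 / q + 1 / q + 2 / q := by ring
  linarith [hsum.trans htail]
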